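/- There exists ν ∈ F[x], unique modulo u_1⋯u_k·F[x], such that ν·δ₀(1) ≡ 1 (mod u_1⋯u_k·F[x]). For any such ν: (a) ν·π_h' − 1 − ν·(h'/gcd(h, h')) ∈ u_1⋯u_k·F[x]; (b) for each 1 ≤ j ≤ k, (1 − α_j)·ν·π_h' ≡ 1 (mod u_j·F[x]). -/

import Mathlib

open Polynomial
open scoped Classical

noncomputable section

variable (F : Type) [Field F]

lemma myDerivFinsetProd {F : Type} [CommRing F] {ι : Type} [DecidableEq ι]
    (s : Finset ι) (f : ι → F[X]) :
    derivative (∏ i ∈ s, f i) = ∑ i ∈ s, (∏ j ∈ s.erase i, f j) * derivative (f i) := by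
  rw [Finset.prod, derivative_prod, Finset.sum]
  refine congrArg _ (Multiset.map_congr rfl fun i hi => ?_)
  congr 1

/-- with `h = ∏_{j=1}^t u_j^{α_j}` (where `α_j ≥ 2` for `j < k`
and `α_j = 1` for `j ≥ k`), `π_h = ∏ u_j`, `g = gcd(h, h') = ∏ u_j^{α_j−1}` and
`δ₀(1) = π_h' − h'/g`, there exists `ν`, unique modulo `u_1⋯u_k`, with
`ν·δ₀(1) ≡ 1 (mod u_1⋯u_k)`; and any such `ν` satisfies
(a) `ν·π_h' − 1 ≡ ν·(h'/g) (mod u_1⋯u_k)` and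
(b) `(1 − α_j)·ν·π_h' ≡ 1 (mod u_j)` for all `j < k`. -/
theorem statement18 [CharZero F] (t k : ℕ) (hk1 : 1 ≤ k) (hkt : k ≤ t)
    (u : Fin t → F[X])
    (humonic : ∀ j, (u j).Monic) (huirr : ∀ j, Irreducible (u j))
    (hudist : Function.Injective u)
    (α : Fin t → ℕ)
    (hαbig : ∀ j : Fin t, (j : ℕ) < k → 2 ≤ α j)
    (hαone : ∀ j : Fin t, k ≤ (j : ℕ) → α j = 1) :
    (∃ ν : F[X],
      (∏ j ∈ Finset.univ.filter (fun j : Fin t => (j : ℕ) < k), u j) ∣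
        (ν * (derivative (∏ j, u j) -
          derivative (∏ j, u j ^ α j) / (∏ j, u j ^ (α j - 1))) - 1)) ∧
    (∀ ν ν' : F[X],
      (∏ j ∈ Finset.univ.filter (fun j : Fin t => (j : ℕ) < k), u j) ∣
        (ν * (derivative (∏ j, u j) -
          derivative (∏ j, u j ^ α j) / (∏ j, u j ^ (α j - 1))) - 1) →
      (∏ j ∈ Finset.univ.filter (fun j : Fin t => (j : ℕ) < k), u j) ∣
        (ν' * (derivative (∏ j, u j) -
          derivative (∏ j, u j ^ α j) / (∏ j, u j ^ (α j - 1))) - 1) →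
      (∏ j ∈ Finset.univ.filter (fun j : Fin t => (j : ℕ) < k), u j) ∣ (ν - ν')) ∧
    (∀ ν : F[X],
      (∏ j ∈ Finset.univ.filter (fun j : Fin t => (j : ℕ) < k), u j) ∣
        (ν * (derivative (∏ j, u j) -
          derivative (∏ j, u j ^ α j) / (∏ j, u j ^ (α j - 1))) - 1) →
      ((∏ j ∈ Finset.univ.filter (fun j : Fin t => (j : ℕ) < k), u j) ∣
        (ν * derivative (∏ j, u j) - 1 -
          ν * (derivative (∏ j, u j ^ α j) / (∏ j, u j ^ (α j - 1))))) ∧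
      (∀ j : Fin t, (j : ℕ) < k →
        u j ∣ ((1 - (α j : ℤ)) • (ν * derivative (∏ i, u i)) - 1))) := by
  classical
  set P : F[X] := ∏ j ∈ Finset.univ.filter (fun j : Fin t => (j : ℕ) < k), u j with hPdef
  set q : F[X] := derivative (∏ j, u j ^ α j) / (∏ j, u j ^ (α j - 1)) with hqdef
  set δ : F[X] := derivative (∏ j, u j) - q with hδdef
  have hα1 : ∀ j : Fin t, 1 ≤ α j := fun j => by
    by_cases h : (j : ℕ) < k
    · exact le_trans one_le_two (hαbig j h)
    · rw [hαone j (le_of_not_gt h)]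
  have hu0 : ∀ j, u j ≠ 0 := fun j => (humonic j).ne_zero
  have hg0 : (∏ j, u j ^ (α j - 1)) ≠ 0 :=
    Finset.prod_ne_zero_iff.mpr fun j _ => pow_ne_zero _ (hu0 j)
  have hpow : ∀ i : Fin t, u i ^ α i = u i ^ (α i - 1) * u i := fun i => by
    conv_lhs => rw [← Nat.sub_add_cancel (hα1 i)]
    rw [pow_succ]
  have hquot : q = ∑ j, C ((α j : F)) * derivative (u j) * ∏ i ∈ Finset.univ.erase j, u i := by
    have h1 : derivative (∏ j, u j ^ α j)
        = (∑ j, C ((α j : F)) * derivative (u j) * ∏ i ∈ Finset.univ.erase j, u i)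
          * ∏ j, u j ^ (α j - 1) := by
      rw [myDerivFinsetProd, Finset.sum_mul]
      refine Finset.sum_congr rfl fun j _ => ?_
      rw [derivative_pow,
        ← Finset.mul_prod_erase Finset.univ (fun i => u i ^ (α i - 1)) (Finset.mem_univ j)]
      have h2 : ∏ i ∈ Finset.univ.erase j, u i ^ α i
          = (∏ i ∈ Finset.univ.erase j, u i ^ (α i - 1)) * ∏ i ∈ Finset.univ.erase j, u i := by
        rw [← Finset.prod_mul_distrib]
        exact Finset.prod_congr rfl fun i _ => hpow i
      rw [h2]; ring
    rw [hqdef, h1, mul_div_cancel_right₀ _ hg0]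
  set D : Fin t → F[X] :=
    fun j => (1 - C ((α j : F))) * derivative (u j) * ∏ i ∈ Finset.univ.erase j, u i with hD
  have hδsum : δ = ∑ j, D j := by
    rw [hδdef, hquot, myDerivFinsetProd, ← Finset.sum_sub_distrib]
    exact Finset.sum_congr rfl fun j _ => by rw [hD]; ring
  have hDdvd : ∀ j i : Fin t, i ≠ j → u j ∣ D i := fun j i hij =>
    Dvd.dvd.mul_left
      (Finset.dvd_prod_of_mem u (Finset.mem_erase.mpr ⟨hij.symm, Finset.mem_univ j⟩)) _
  have hprime : ∀ j, Prime (u j) := fun j => (huirr j).prime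
  have hnotdvdder : ∀ j, ¬ u j ∣ derivative (u j) := by
    intro j hdvd
    have hd0 : derivative (u j) ≠ 0 := fun h0 => by
      have := natDegree_eq_zero_of_derivative_eq_zero h0
      exact (huirr j).natDegree_pos.ne' this
    have h1 := Polynomial.natDegree_le_of_dvd hdvd hd0
    have h2 := Polynomial.natDegree_derivative_lt (p := u j) (huirr j).natDegree_pos.ne'
    omega
  have hnotdvdprod : ∀ j : Fin t, ¬ u j ∣ ∏ i ∈ Finset.univ.erase j, u i := by
    intro j hdvd
    obtain ⟨i, hi, hdvd'⟩ := ((hprime j).dvd_finset_prod_iff u).mp hdvd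
    have : u j = u i :=
      eq_of_monic_of_associated (humonic j) (humonic i)
        ((huirr j).associated_of_dvd (huirr i) hdvd')
    exact Finset.ne_of_mem_erase hi (hudist this.symm)
  have hconstunit : ∀ j : Fin t, (j : ℕ) < k → IsUnit (1 - C ((α j : F))) := by
    intro j hj
    rw [← C_1, ← C_sub]
    refine isUnit_C.mpr (isUnit_iff_ne_zero.mpr fun h0 => ?_)
    have h1 : ((α j : ℕ) : F) = 1 := (sub_eq_zero.mp h0).symm
    have h2 : (α j : ℕ) = 1 := by exact_mod_cast h1
    have := hαbig j hj
    omega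
  have hδnotdvd : ∀ j : Fin t, (j : ℕ) < k → ¬ u j ∣ δ := by
    intro j hj hdvd
    have h1 : u j ∣ ∑ i ∈ Finset.univ.erase j, D i :=
      Finset.dvd_sum fun i hi => hDdvd j i (Finset.ne_of_mem_erase hi)
    have h2 : δ = D j + ∑ i ∈ Finset.univ.erase j, D i := by
      rw [hδsum, Finset.add_sum_erase _ _ (Finset.mem_univ j)]
    have h3 : u j ∣ D j := by
      have h4 : D j = δ - ∑ i ∈ Finset.univ.erase j, D i := by rw [h2]; ring
      rw [h4]; exact dvd_sub hdvd h1
    rw [hD] at h3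
    rcases (hprime j).dvd_or_dvd h3 with h | h
    · rcases (hprime j).dvd_or_dvd h with h' | h'
      · exact (hprime j).not_unit (isUnit_of_dvd_unit h' (hconstunit j hj))
      · exact hnotdvdder j h'
    · exact hnotdvdprod j h
  have hcopP : IsCoprime P δ := by
    rw [hPdef]
    exact IsCoprime.prod_left fun j hj =>
      ((huirr j).coprime_iff_not_dvd).mpr (hδnotdvd j (Finset.mem_filter.mp hj).2)
  refine ⟨?_, ?_, ?_⟩
  · obtain ⟨a, b, hab⟩ := hcopP.symm
    exact ⟨a, ⟨-b, by linear_combination hab⟩⟩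
  · intro ν ν' h1 h2
    have h3 : P ∣ (ν - ν') * δ := by
      have h4 : (ν - ν') * δ = (ν * δ - 1) - (ν' * δ - 1) := by ring
      rw [h4]; exact dvd_sub h1 h2
    exact hcopP.dvd_of_dvd_mul_right h3
  · intro ν hν
    constructor
    · have he : ν * derivative (∏ j, u j) - 1 - ν * q = ν * δ - 1 := by rw [hδdef]; ring
      rw [he]; exact hν
    · intro j hj
      have hjP : u j ∣ P :=
        Finset.dvd_prod_of_mem u (Finset.mem_filter.mpr ⟨Finset.mem_univ j, hj⟩)
      have h1 : u j ∣ ν * δ - 1 := hjP.trans hν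
      have hkey : u j ∣ (1 - C ((α j : F))) * derivative (∏ i, u i) - δ := by
        rw [hδsum, myDerivFinsetProd, Finset.mul_sum, ← Finset.sum_sub_distrib]
        refine Finset.dvd_sum fun i _ => ?_
        by_cases hij : i = j
        · subst hij
          have hz : (1 - C ((α i : F))) * ((∏ l ∈ Finset.univ.erase i, u l) * derivative (u i))
              - D i = 0 := by rw [hD]; ring
          rw [hz]
          exact dvd_zero _
        · refine dvd_sub ?_ (hDdvd j i hij)
          exact ((Finset.dvd_prod_of_mem u
            (Finset.mem_erase.mpr ⟨Ne.symm hij, Finset.mem_univ j⟩)).mul_right _).mul_left _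
      have h2 : u j ∣ ν * ((1 - C ((α j : F))) * derivative (∏ i, u i) - δ) := hkey.mul_left ν
      have h3 := dvd_add h2 h1
      have he : (1 - (α j : ℤ)) • (ν * derivative (∏ i, u i)) - 1
          = ν * ((1 - C ((α j : F))) * derivative (∏ i, u i) - δ) + (ν * δ - 1) := by
        rw [zsmul_eq_mul, C_eq_natCast]
        push_cast
        ring
      rw [he]; exact h3
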